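/- Online gradient descent regret bound for the AP surrogate loss: suppose for each t, l^{(t)}: ℝᵈ → ℝ is convex, nonnegative, and its gradient satisfies ‖∇l^{(t)}(θ)‖² ≤ (R²/δ)·l^{(t)}(θ) for all θ. Then gradient descent θ^{(t+1)} = θ^{(t)} − η∇l^{(t)}(θ^{(t)}) with step size η = δ/R² satisfies, for any comparator u, Σ_{t=1}^{T} l^{(t)}(θ^{(t)}) ≤ 2·Σ_{t=1}^{T} l^{(t)}(u) + (R²/δ)·‖u − θ^{(1)}‖². -/

import Mathlib

open Set InnerProductSpace

lemma convex_grad_ineq {d : ℕ} {f : EuclideanSpace ℝ (Fin d) → ℝ}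
    (hf : ConvexOn ℝ Set.univ f) {x : EuclideanSpace ℝ (Fin d)}
    (hd : DifferentiableAt ℝ f x) (y : EuclideanSpace ℝ (Fin d)) :
    ⟪gradient f x, y - x⟫_ℝ ≤ f y - f x := by
  set φ : ℝ → ℝ := fun s => f (x + s • (y - x)) with hφ
  have hc : HasDerivAt (fun s : ℝ => x + s • (y - x)) (y - x) 0 := by
    simpa using ((hasDerivAt_id (0:ℝ)).smul_const (y - x)).const_add x
  have hφd : HasDerivAt φ (⟪gradient f x, y - x⟫_ℝ) 0 := by
    have h1 : HasFDerivAt f (toDual ℝ (EuclideanSpace ℝ (Fin d)) (gradient f x)) x :=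
      hd.hasGradientAt.hasFDerivAt
    have h1' : HasFDerivAt f (toDual ℝ (EuclideanSpace ℝ (Fin d)) (gradient f x))
        (x + (0:ℝ) • (y - x)) := by simpa using h1
    have h2 := h1'.comp_hasDerivAt (0:ℝ) hc
    simpa [hφ, Function.comp_def, InnerProductSpace.toDual_apply_apply] using h2
  have htend : Filter.Tendsto (slope φ 0) (nhdsWithin 0 (Ioi (0:ℝ)))
      (nhds (⟪gradient f x, y - x⟫_ℝ)) := by
    refine (hasDerivAt_iff_tendsto_slope.mp hφd).mono_left ?_
    exact nhdsWithin_mono _ (fun s hs => ne_of_gt hs)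
  refine le_of_tendsto htend ?_
  filter_upwards [Ioc_mem_nhdsGT_of_mem (show (0:ℝ) ∈ Ico 0 1 by simp)] with s hs
  have hs0 : (0:ℝ) < s := hs.1
  have hconv : φ s ≤ (1 - s) * f x + s * f y := by
    have := hf.2 (mem_univ x) (mem_univ y) (by linarith [hs.2] : (0:ℝ) ≤ 1 - s)
      (le_of_lt hs0) (by ring)
    have hpt : (1 - s) • x + s • y = x + s • (y - x) := by
      module
    simpa [hpt, smul_eq_mul] using this
  have hφ0 : φ 0 = f x := by simp [hφ]
  rw [slope_def_field, sub_zero, div_le_iff₀ hs0]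
  nlinarith [hconv, hφ0]

theorem stmt10 {d : ℕ} (R δ : ℝ) (hR : 0 < R) (hδ : 0 < δ)
    (l : ℕ → EuclideanSpace ℝ (Fin d) → ℝ)
    (hconv : ∀ t, ConvexOn ℝ Set.univ (l t))
    (hnonneg : ∀ t θ, 0 ≤ l t θ)
    (hdiff : ∀ t θ, DifferentiableAt ℝ (l t) θ)
    (hgrad : ∀ t θ, ‖gradient (l t) θ‖ ^ 2 ≤ (R ^ 2 / δ) * l t θ)
    (θ : ℕ → EuclideanSpace ℝ (Fin d)) (T : ℕ)
    (hupd : ∀ t, θ (t + 1) = θ t - (δ / R ^ 2) • gradient (l t) (θ t))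
    (u : EuclideanSpace ℝ (Fin d)) :
    ∑ t ∈ Finset.Icc 1 T, l t (θ t) ≤
      2 * ∑ t ∈ Finset.Icc 1 T, l t u + (R ^ 2 / δ) * ‖u - θ 1‖ ^ 2 := by
  set η : ℝ := δ / R ^ 2 with hη
  have hηpos : 0 < η := div_pos hδ (by positivity)
  -- per-step inequality
  have key : ∀ t, η * l t (θ t) ≤ ‖u - θ t‖ ^ 2 - ‖u - θ (t + 1)‖ ^ 2 + 2 * η * l t u := by
    intro t
    set g := gradient (l t) (θ t) with hg
    have hdiffeq : u - θ (t + 1) = (u - θ t) + η • g := by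
      rw [hupd t]; abel
    have hnorm : ‖u - θ (t + 1)‖ ^ 2
        = ‖u - θ t‖ ^ 2 + 2 * (η * ⟪u - θ t, g⟫_ℝ) + η ^ 2 * ‖g‖ ^ 2 := by
      rw [hdiffeq, norm_add_sq_real, norm_smul, real_inner_smul_right]
      simp [abs_of_pos hηpos]
      ring
    have hcg : ⟪u - θ t, g⟫_ℝ ≤ l t u - l t (θ t) := by
      rw [real_inner_comm]
      exact convex_grad_ineq (hconv t) (hdiff t (θ t)) u
    have hgb : ‖g‖ ^ 2 ≤ (1 / η) * l t (θ t) := by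
      have := hgrad t (θ t)
      have : (R ^ 2 / δ) = 1 / η := by
        field_simp [hη]; rw [hη]; field_simp
      rw [← this]; exact hgrad t (θ t)
    have h2 : η ^ 2 * ‖g‖ ^ 2 ≤ η * l t (θ t) := by
      have := mul_le_mul_of_nonneg_left hgb (le_of_lt (mul_pos hηpos hηpos))
      calc η ^ 2 * ‖g‖ ^ 2 = (η * η) * ‖g‖ ^ 2 := by ring
        _ ≤ (η * η) * ((1 / η) * l t (θ t)) := this
        _ = η * l t (θ t) := by field_simp
    nlinarith [mul_le_mul_of_nonneg_left hcg (le_of_lt hηpos)]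
  -- telescoping sum
  have hsum : ∀ N : ℕ, ∑ t ∈ Finset.Icc 1 N, η * l t (θ t) ≤
      ‖u - θ 1‖ ^ 2 - ‖u - θ (N + 1)‖ ^ 2 + 2 * η * ∑ t ∈ Finset.Icc 1 N, l t u := by
    intro N
    induction N with
    | zero => simp
    | succ N ih =>
      rw [Finset.sum_Icc_succ_top (by omega : 1 ≤ N + 1),
          Finset.sum_Icc_succ_top (by omega : 1 ≤ N + 1)]
      have := key (N + 1)
      nlinarith
  have h := hsum T
  have hnn : 0 ≤ ‖u - θ (T + 1)‖ ^ 2 := by positivity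
  have hfin : η * ∑ t ∈ Finset.Icc 1 T, l t (θ t) ≤
      ‖u - θ 1‖ ^ 2 + 2 * η * ∑ t ∈ Finset.Icc 1 T, l t u := by
    rw [Finset.mul_sum]; linarith
  have hRδ : (R ^ 2 / δ) = 1 / η := by field_simp [hη]; rw [hη]; field_simp
  rw [hRδ]
  rw [← mul_le_mul_iff_of_pos_left hηpos]
  calc η * ∑ t ∈ Finset.Icc 1 T, l t (θ t)
      ≤ ‖u - θ 1‖ ^ 2 + 2 * η * ∑ t ∈ Finset.Icc 1 T, l t u := hfin
    _ = η * (2 * ∑ t ∈ Finset.Icc 1 T, l t u + 1 / η * ‖u - θ 1‖ ^ 2) := by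
        field_simp; ring
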